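/- For every vector x⃗ = (x₁, …, xₙ) ∈ ℝⁿ, every real α, and every index j, the partial derivative of the Boltzmann operator with respect to x_j equals Softmax(α x⃗)_j · (1 + α (x_j − B_α(x⃗))), where Softmax(v⃗)_j = e^{v_j} / Σᵢ₌₁ⁿ e^{vᵢ}. -/

import Mathlib

/-- The Boltzmann operator `B_α(x) = (∑ i, x i · e^{α x i}) / (∑ i, e^{α x i})`. -/
noncomputable def boltzmann {n : ℕ} (α : ℝ) (x : Fin n → ℝ) : ℝ :=
  (∑ i, x i * Real.exp (α * x i)) / (∑ i, Real.exp (α * x i))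

/-- The softmax function: `Softmax(v)_j = e^{v j} / ∑ i, e^{v i}`. -/
noncomputable def softmax {n : ℕ} (v : Fin n → ℝ) (j : Fin n) : ℝ :=
  Real.exp (v j) / ∑ i, Real.exp (v i)

theorem boltzmann_partial_deriv {n : ℕ} (x : Fin n → ℝ) (α : ℝ) (j : Fin n) :
    HasDerivAt (fun t : ℝ => boltzmann α (Function.update x j t))
      (softmax (fun i => α * x i) j * (1 + α * (x j - boltzmann α x))) (x j) := by
  have hexp : ∀ i : Fin n, HasDerivAt (fun t : ℝ => Real.exp (α * Function.update x j t i))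
      (if i = j then Real.exp (α * x j) * α else 0) (x j) := by
    intro i
    rcases eq_or_ne i j with h | h
    · rw [h]
      simp only [Function.update_self, if_pos rfl]
      simpa using ((hasDerivAt_id (x j)).const_mul α).exp
    · simp only [Function.update_of_ne h, if_neg h]
      exact hasDerivAt_const _ _
  have hS : HasDerivAt (fun t : ℝ => ∑ i, Real.exp (α * Function.update x j t i))
      (Real.exp (α * x j) * α) (x j) := by
    have := HasDerivAt.fun_sum (u := Finset.univ) (fun i _ => hexp i)
    simpa using this
  have hterm : ∀ i : Fin n,
      HasDerivAt (fun t : ℝ => Function.update x j t i * Real.exp (α * Function.update x j t i))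
      (if i = j then Real.exp (α * x j) + x j * (Real.exp (α * x j) * α) else 0) (x j) := by
    intro i
    rcases eq_or_ne i j with h | h
    · rw [h]
      simp only [Function.update_self, if_pos rfl]
      have h1 : HasDerivAt (fun t : ℝ => t) 1 (x j) := hasDerivAt_id (x j)
      have h2 : HasDerivAt (fun t : ℝ => Real.exp (α * t)) (Real.exp (α * x j) * α) (x j) := by
        simpa using ((hasDerivAt_id (x j)).const_mul α).exp
      have := h1.fun_mul h2
      simpa [mul_comm] using this
    · simp only [Function.update_of_ne h, if_neg h]
      exact hasDerivAt_const _ _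
  have hN : HasDerivAt
      (fun t : ℝ => ∑ i, Function.update x j t i * Real.exp (α * Function.update x j t i))
      (Real.exp (α * x j) + x j * (Real.exp (α * x j) * α)) (x j) := by
    have := HasDerivAt.fun_sum (u := Finset.univ) (fun i _ => hterm i)
    simpa using this
  have hSpos : (0:ℝ) < ∑ i, Real.exp (α * x i) :=
    Finset.sum_pos (fun i _ => Real.exp_pos _) ⟨j, Finset.mem_univ j⟩
  have hS0 : (∑ i, Real.exp (α * Function.update x j (x j) i)) ≠ 0 := by
    simp only [Function.update_eq_self]
    exact ne_of_gt hSpos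
  have hdiv := hN.fun_div hS hS0
  have hfun : (fun t : ℝ => boltzmann α (Function.update x j t)) =
      fun t : ℝ => (∑ i, Function.update x j t i * Real.exp (α * Function.update x j t i)) /
        (∑ i, Real.exp (α * Function.update x j t i)) := rfl
  rw [hfun]
  convert hdiv using 1
  · rfl
  · rfl
  simp only [Function.update_eq_self, boltzmann, softmax]
  field_simp
  ring
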